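/- (Deflation Theorem 1.) Let f(x) be an n-variate polynomial system with a μ-fold isolated zero at x = ζ, let 𝒟 = (Λ₁,…,Λ_μ) be a basis of 𝒟_ζ, and let 𝒟f(x) = (Λ_i(∂_x)[f_k])_{i,k}. Then there exists a set I = {(i₁,k₁),…,(iₙ,kₙ)} of n index pairs such that the corresponding n rows of the Jacobian J_{𝒟f}(ζ) are linearly independent, and for any such I the square n × n system 𝒟f^I(x) = (Λ_{i_j}(∂_x)[f_{k_j}])_{j=1,…,n} = 0 has a simple root at x = ζ: it vanishes at ζ and its n × n Jacobian at ζ is nonsingular. -/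

import Mathlib

open MvPolynomial

/-- Total degree of a multi-exponent. -/
def multideg {n : ℕ} (α : Fin n →₀ ℕ) : ℕ := α.sum fun _ k => k

/-- Normalized derivative `d^α g = (1/α!) ∂^α g` as a polynomial. -/
noncomputable def nderiv {n : ℕ} (α : Fin n →₀ ℕ) (g : MvPolynomial (Fin n) ℝ) :
    MvPolynomial (Fin n) ℝ :=
  ∑ γ ∈ g.support,
    monomial (γ - α) (((∏ i, (γ i).choose (α i) : ℕ) : ℝ) * coeff γ g)

/-- `Λ(∂_x)[g]`: apply the differential operator with coefficients `Λ`
(in the normalized basis `d^α`), keeping a polynomial result. -/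
noncomputable def applyPoly {n : ℕ} (Λ : (Fin n →₀ ℕ) →₀ ℝ)
    (g : MvPolynomial (Fin n) ℝ) : MvPolynomial (Fin n) ℝ :=
  Λ.sum fun α c => c • nderiv α g

/-- `Λ ↦ Λ^ζ[g]`, as a linear map in `Λ`. -/
noncomputable def applyAtL {n : ℕ} (ζ : Fin n → ℝ) (g : MvPolynomial (Fin n) ℝ) :
    ((Fin n →₀ ℕ) →₀ ℝ) →ₗ[ℝ] ℝ :=
  Finsupp.linearCombination ℝ (fun α => eval ζ (nderiv α g))

/-- `Λ^ζ[g]`. -/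
noncomputable def applyAt {n : ℕ} (ζ : Fin n → ℝ) (Λ : (Fin n →₀ ℕ) →₀ ℝ)
    (g : MvPolynomial (Fin n) ℝ) : ℝ := applyAtL ζ g Λ

/-- The orthogonal (dual space) of an ideal at ζ. -/
noncomputable def dualSpace {n : ℕ} (ζ : Fin n → ℝ)
    (Q : Ideal (MvPolynomial (Fin n) ℝ)) : Submodule ℝ ((Fin n →₀ ℕ) →₀ ℝ) :=
  ⨅ p ∈ Q, LinearMap.ker (applyAtL ζ p)

/-- The maximal ideal at ζ. -/
noncomputable def maxIdealAt {n : ℕ} (ζ : Fin n → ℝ) : Ideal (MvPolynomial (Fin n) ℝ) :=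
  Ideal.span (Set.range fun i => X i - C (ζ i))

/-- `Q` is the primary component of `I` at an isolated root `ζ`. -/
def IsPrimaryComponentAt {n : ℕ} (ζ : Fin n → ℝ)
    (I Q : Ideal (MvPolynomial (Fin n) ℝ)) : Prop :=
  Q.IsPrimary ∧ Q.radical = maxIdealAt ζ ∧
    ∃ S : Finset (Ideal (MvPolynomial (Fin n) ℝ)),
      (∀ P ∈ S, P.IsPrimary ∧ ¬ P.radical ≤ maxIdealAt ζ) ∧ I = S.inf id ⊓ Q

/-- Elements of the dual space of degree at most `t`. -/
noncomputable def dualSpaceLE {n : ℕ} (ζ : Fin n → ℝ)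
    (Q : Ideal (MvPolynomial (Fin n) ℝ)) (t : ℕ) :
    Submodule ℝ ((Fin n →₀ ℕ) →₀ ℝ) :=
  dualSpace ζ Q ⊓ Finsupp.supported ℝ ℝ {α | multideg α ≤ t}

/-- The derivation `∂/∂∂_i` in the normalized coordinates: shift of coefficients. -/
noncomputable def dshift {n : ℕ} (i : Fin n) (Λ : (Fin n →₀ ℕ) →₀ ℝ) :
    (Fin n →₀ ℕ) →₀ ℝ :=
  Finsupp.comapDomain (fun β => β + Finsupp.single i 1) Λ
    (fun _ _ _ _ h => add_right_cancel h)

/-- Truncation: set `∂_j = 0` for `j > k`. -/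
noncomputable def trunck {n : ℕ} (k : Fin n) (Λ : (Fin n →₀ ℕ) →₀ ℝ) :
    (Fin n →₀ ℕ) →₀ ℝ :=
  Λ.filter (fun α => ∀ j, k < j → α j = 0)

/-- Integration with respect to `∂_k` in the normalized coordinates. -/
noncomputable def intk {n : ℕ} (k : Fin n) (Λ : (Fin n →₀ ℕ) →₀ ℝ) :
    (Fin n →₀ ℕ) →₀ ℝ :=
  Finsupp.mapDomain (fun α => α + Finsupp.single k 1) Λ

/-- Row `(i,k)` of the Jacobian of the system `𝒟f = (Λ_i(∂_x)[f_k])_{i,k}`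
at the point `ζ`. -/
noncomputable def jacRow {n s μ : ℕ} (Λs : Fin μ → ((Fin n →₀ ℕ) →₀ ℝ))
    (f : Fin s → MvPolynomial (Fin n) ℝ) (ζ : Fin n → ℝ)
    (ik : Fin μ × Fin s) (j : Fin n) : ℝ :=
  MvPolynomial.eval ζ (MvPolynomial.pderiv j (applyPoly (Λs ik.1) (f ik.2)))

/-! ## Auxiliary lemmas -/

lemma coeff_nderiv {n : ℕ} (α β : Fin n →₀ ℕ) (g : MvPolynomial (Fin n) ℝ) :
    coeff β (nderiv α g)
      = ((∏ i, ((β + α) i).choose (α i) : ℕ) : ℝ) * coeff (β + α) g := by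
  unfold nderiv
  rw [MvPolynomial.coeff_sum]
  simp only [coeff_monomial]
  rw [Finset.sum_eq_single (β + α)]
  · by_cases h : β + α ∈ g.support
    · simp [add_tsub_cancel_right]
    · rw [MvPolynomial.notMem_support_iff.mp h]
      simp
  · intro γ hγ hne
    split_ifs with h
    · have hex : ∃ i, γ i < α i := by
        by_contra hc
        push_neg at hc
        apply hne
        ext i
        have h1 := congrArg (fun m => m i) h
        have h2 := hc i
        simp [Finsupp.tsub_apply] at h1
        simp [Finsupp.add_apply]
        omega
      obtain ⟨i, hi⟩ := hex
      have hz : (∏ j, (γ j).choose (α j)) = 0 :=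
        Finset.prod_eq_zero (Finset.mem_univ i) (Nat.choose_eq_zero_of_lt hi)
      simp [hz]
    · rfl
  · intro h
    rw [MvPolynomial.notMem_support_iff.mp h]
    simp

lemma nderiv_add {n : ℕ} (α : Fin n →₀ ℕ) (g h : MvPolynomial (Fin n) ℝ) :
    nderiv α (g + h) = nderiv α g + nderiv α h := by
  ext β; simp [coeff_nderiv, coeff_add, mul_add]

lemma nderiv_smul {n : ℕ} (α : Fin n →₀ ℕ) (c : ℝ) (g : MvPolynomial (Fin n) ℝ) :
    nderiv α (c • g) = c • nderiv α g := by
  ext β; simp [coeff_nderiv, MvPolynomial.coeff_smul]; ring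

lemma nderiv_zero' {n : ℕ} (α : Fin n →₀ ℕ) : nderiv α (0 : MvPolynomial (Fin n) ℝ) = 0 := by
  ext β; simp [coeff_nderiv]

lemma nderiv_zero {n : ℕ} (g : MvPolynomial (Fin n) ℝ) : nderiv 0 g = g := by
  ext β; simp [coeff_nderiv]

lemma natS2 (g a : ℕ) : g.choose a * (g - a) = (a + 1) * g.choose (a + 1) := by
  rw [mul_comm (a+1), Nat.choose_succ_right_eq]

lemma pderiv_nderiv {n : ℕ} (l : Fin n) (α : Fin n →₀ ℕ) (g : MvPolynomial (Fin n) ℝ) :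
    pderiv l (nderiv α g)
      = (((α l + 1 : ℕ)) : ℝ) • nderiv (α + Finsupp.single l 1) g := by
  unfold nderiv
  rw [map_sum, Finset.smul_sum]
  refine Finset.sum_congr rfl (fun γ hγ => ?_)
  rw [pderiv_monomial, smul_monomial]
  congr 1
  · rw [tsub_tsub]
  · rw [Finsupp.tsub_apply]
    have hsplit : ∀ (F : Fin n → ℕ), (∏ i, F i) = F l * ∏ i ∈ Finset.univ.erase l, F i :=
      fun F => (Finset.mul_prod_erase Finset.univ F (Finset.mem_univ l)).symm
    have h1 : (∏ i, (γ i).choose (((α + Finsupp.single l 1) : Fin n →₀ ℕ) i))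
        = (γ l).choose (α l + 1) * ∏ i ∈ Finset.univ.erase l, (γ i).choose (α i) := by
      rw [hsplit]
      have e1 : ((α + Finsupp.single l 1) : Fin n →₀ ℕ) l = α l + 1 := by simp
      rw [e1]
      refine congrArg _ (Finset.prod_congr rfl (fun i hi => ?_))
      have hil : i ≠ l := (Finset.mem_erase.mp hi).1
      simp [Finsupp.single_apply, Ne.symm hil]
    have key : (∏ i, (γ i).choose (α i)) * (γ l - α l)
        = (α l + 1) * ∏ i, (γ i).choose (((α + Finsupp.single l 1) : Fin n →₀ ℕ) i) := by
      rw [h1, hsplit (fun i => (γ i).choose (α i)), ← mul_assoc, ← natS2]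
      ring
    rw [mul_right_comm, ← Nat.cast_mul, key, Nat.cast_mul, smul_eq_mul]
    ring

lemma prod_choose_congr {n : ℕ} (l : Fin n) {δ δ' γ γ' : Fin n →₀ ℕ}
    (h : ∀ i, i ≠ l → δ i = δ' i ∧ γ i = γ' i)
    (hl : (γ l).choose (δ l) = (γ' l).choose (δ' l)) :
    ∏ i, (γ i).choose (δ i) = ∏ i, (γ' i).choose (δ' i) := by
  rw [← Finset.mul_prod_erase Finset.univ _ (Finset.mem_univ l),
      ← Finset.mul_prod_erase Finset.univ _ (Finset.mem_univ l), hl]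
  refine congrArg _ (Finset.prod_congr rfl (fun i hi => ?_))
  obtain ⟨h1, h2⟩ := h i (Finset.mem_erase.mp hi).1
  rw [h1, h2]

lemma pascal' (b a : ℕ) (hb : b ≠ 0) (ha : a ≠ 0) :
    (b + a).choose a = (b + a - 1).choose a + (b + a - 1).choose (a - 1) := by
  obtain ⟨b', rfl⟩ := Nat.exists_eq_succ_of_ne_zero hb
  obtain ⟨a', rfl⟩ := Nat.exists_eq_succ_of_ne_zero ha
  have h : b' + 1 + (a' + 1) = (b' + a' + 1) + 1 := by omega
  rw [h]
  simp only [Nat.add_sub_cancel, Nat.succ_eq_add_one, Nat.choose_succ_succ]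
  omega


lemma prod_split_add {n : ℕ} (l : Fin n) (F G H : Fin n → ℕ)
    (h : ∀ i, i ≠ l → F i = G i ∧ F i = H i) (hl : F l = G l + H l) :
    ∏ i, F i = ∏ i, G i + ∏ i, H i := by
  rw [← Finset.mul_prod_erase Finset.univ F (Finset.mem_univ l),
      ← Finset.mul_prod_erase Finset.univ G (Finset.mem_univ l),
      ← Finset.mul_prod_erase Finset.univ H (Finset.mem_univ l)]
  have hG : ∏ i ∈ Finset.univ.erase l, G i = ∏ i ∈ Finset.univ.erase l, F i :=
    Finset.prod_congr rfl (fun i hi => ((h i (Finset.mem_erase.mp hi).1).1).symm)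
  have hH : ∏ i ∈ Finset.univ.erase l, H i = ∏ i ∈ Finset.univ.erase l, F i :=
    Finset.prod_congr rfl (fun i hi => ((h i (Finset.mem_erase.mp hi).1).2).symm)
  rw [hG, hH, hl, add_mul]

lemma sub_single_add {n : ℕ} (l : Fin n) (u w : Fin n →₀ ℕ) (h : u l ≠ 0) :
    (u - Finsupp.single l 1) + w = u + w - Finsupp.single l 1 := by
  ext i
  rcases eq_or_ne i l with rfl | hil
  · simp [Finsupp.tsub_apply, Finsupp.single_apply]
    omega
  · simp [Finsupp.tsub_apply, Finsupp.single_apply, Ne.symm hil]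

lemma nderiv_X_sub_C_mul {n : ℕ} (l : Fin n) (c : ℝ) (α : Fin n →₀ ℕ)
    (g : MvPolynomial (Fin n) ℝ) :
    nderiv α ((X l - C c) * g)
      = (X l - C c) * nderiv α g
        + (if α l = 0 then 0 else nderiv (α - Finsupp.single l 1) g) := by
  ext β
  rw [coeff_add, coeff_nderiv, sub_mul, coeff_sub, coeff_X_mul', coeff_C_mul, sub_mul,
      coeff_sub, coeff_X_mul', coeff_C_mul, coeff_nderiv]
  by_cases ha : α l = 0 <;> by_cases hb : β l = 0 <;>
    simp only [ha, hb, if_true, if_false, eq_self_iff_true, Finsupp.mem_support_iff,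
      Finsupp.add_apply, ne_eq, MvPolynomial.coeff_zero, not_true, not_false_iff,
      Nat.add_zero, Nat.zero_add, if_neg, not_not, coeff_nderiv]
  · -- α l = 0, β l = 0
    simp [coeff_nderiv]
    try ring
  · -- α l = 0, β l ≠ 0
    have i2 : (β - Finsupp.single l 1) + α = β + α - Finsupp.single l 1 :=
      sub_single_add l β α hb
    have p2 : (∏ x, (((β - Finsupp.single l 1) + α : Fin n →₀ ℕ) x).choose (α x))
        = ∏ x, ((β + α : Fin n →₀ ℕ) x).choose (α x) := by
      refine prod_choose_congr l (fun i hil => ⟨rfl, ?_⟩) ?_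
      · simp [Finsupp.tsub_apply, Finsupp.single_apply, Ne.symm hil]
      · simp [Finsupp.tsub_apply, Finsupp.single_apply, ha]
    simp only [Finsupp.add_apply] at p2
    rw [i2, p2]
    ring
  · -- α l ≠ 0, β l = 0
    have i3 : β + (α - Finsupp.single l 1) = β + α - Finsupp.single l 1 := by
      rw [add_comm, sub_single_add l α β ha, add_comm α β]
    have p3 : (∏ x, ((β + (α - Finsupp.single l 1) : Fin n →₀ ℕ) x).choose
          ((α - Finsupp.single l 1 : Fin n →₀ ℕ) x))
        = ∏ x, ((β + α : Fin n →₀ ℕ) x).choose (α x) := by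
      refine prod_choose_congr l (fun i hil => ⟨?_, ?_⟩) ?_
      · simp [Finsupp.tsub_apply, Finsupp.single_apply, Ne.symm hil]
      · simp [Finsupp.tsub_apply, Finsupp.single_apply, Ne.symm hil]
      · simp [Finsupp.tsub_apply, Finsupp.single_apply, hb, Nat.choose_self]
    simp only [Finsupp.add_apply] at p3
    rw [i3, p3]
    ring
  · -- α l ≠ 0, β l ≠ 0
    have i2 : (β - Finsupp.single l 1) + α = β + α - Finsupp.single l 1 :=
      sub_single_add l β α hb
    have i3 : β + (α - Finsupp.single l 1) = β + α - Finsupp.single l 1 := by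
      rw [add_comm, sub_single_add l α β ha, add_comm α β]
    have i2' : ∀ x, (β - Finsupp.single l 1 : Fin n →₀ ℕ) x + α x
        = (β + α - Finsupp.single l 1 : Fin n →₀ ℕ) x := fun x => by
      rw [← Finsupp.add_apply, i2]
    have i3' : ∀ x, β x + (α - Finsupp.single l 1 : Fin n →₀ ℕ) x
        = (β + α - Finsupp.single l 1 : Fin n →₀ ℕ) x := fun x => by
      rw [← Finsupp.add_apply, i3]
    have hcond : ¬(β l + α l = 0) := by omega
    have p4 : (∏ x, (β x + α x).choose (α x))
        = (∏ x, ((β + α - Finsupp.single l 1 : Fin n →₀ ℕ) x).choose (α x))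
          + ∏ x, ((β + α - Finsupp.single l 1 : Fin n →₀ ℕ) x).choose
              ((α - Finsupp.single l 1 : Fin n →₀ ℕ) x) := by
      refine prod_split_add l _ _ _ (fun i hil => ?_) ?_
      · constructor <;>
          simp [Finsupp.tsub_apply, Finsupp.single_apply, Ne.symm hil, Finsupp.add_apply]
      · simp only [Finsupp.tsub_apply, Finsupp.add_apply, Finsupp.single_apply, if_pos rfl]
        exact pascal' (β l) (α l) hb ha
    simp only [if_pos hcond, i2, i3, i2', i3', p4]
    push_cast
    ring

/-- weighted integration operator: adjoint of `g ↦ ∂g/∂x l`. -/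
noncomputable def Emap {n : ℕ} (l : Fin n) (Λ : (Fin n →₀ ℕ) →₀ ℝ) :
    (Fin n →₀ ℕ) →₀ ℝ :=
  Λ.sum fun α c => Finsupp.single (α + Finsupp.single l 1) (((α l + 1 : ℕ) : ℝ) * c)

lemma applyAt_single {n : ℕ} (ζ : Fin n → ℝ) (α : Fin n →₀ ℕ) (c : ℝ)
    (g : MvPolynomial (Fin n) ℝ) :
    applyAt ζ (Finsupp.single α c) g = c * eval ζ (nderiv α g) := by
  unfold applyAt applyAtL
  rw [Finsupp.linearCombination_single, smul_eq_mul]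

lemma applyPoly_zero {n : ℕ} (g : MvPolynomial (Fin n) ℝ) : applyPoly 0 g = 0 :=
  Finsupp.sum_zero_index

lemma applyPoly_add {n : ℕ} (Λ₁ Λ₂ : (Fin n →₀ ℕ) →₀ ℝ) (g : MvPolynomial (Fin n) ℝ) :
    applyPoly (Λ₁ + Λ₂) g = applyPoly Λ₁ g + applyPoly Λ₂ g :=
  Finsupp.sum_add_index' (fun a => zero_smul ℝ _) (fun a b₁ b₂ => add_smul b₁ b₂ _)

lemma applyPoly_single {n : ℕ} (α : Fin n →₀ ℕ) (c : ℝ) (g : MvPolynomial (Fin n) ℝ) :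
    applyPoly (Finsupp.single α c) g = c • nderiv α g :=
  Finsupp.sum_single_index (zero_smul ℝ _)

lemma eval_applyPoly {n : ℕ} (ζ : Fin n → ℝ) (Λ : (Fin n →₀ ℕ) →₀ ℝ)
    (g : MvPolynomial (Fin n) ℝ) :
    eval ζ (applyPoly Λ g) = applyAt ζ Λ g := by
  induction Λ using Finsupp.induction_linear with
  | zero => simp [applyPoly_zero, applyAt]
  | add f h ihf ihh =>
      unfold applyAt at *
      rw [applyPoly_add, map_add, ihf, ihh, map_add]
  | single α c => rw [applyPoly_single, applyAt_single, smul_eq_C_mul, map_mul, eval_C]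

lemma Emap_apply {n : ℕ} (l : Fin n) (Λ : (Fin n →₀ ℕ) →₀ ℝ) (γ : Fin n →₀ ℕ) :
    Emap l Λ γ = (γ l : ℝ) * Λ (γ - Finsupp.single l 1) := by
  classical
  rw [Emap, Finsupp.sum_apply, Finsupp.sum]
  by_cases hγ : γ l = 0
  · rw [Finset.sum_eq_zero, hγ]
    · simp
    · intro α hα
      rw [Finsupp.single_apply, if_neg]
      intro h
      have := congrArg (fun m => m l) h
      simp [Finsupp.add_apply, Finsupp.single_apply] at this
      omega
  · have hkey : γ - Finsupp.single l 1 + Finsupp.single l 1 = γ := by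
      ext i
      rcases eq_or_ne i l with rfl | hil
      · simp [Finsupp.tsub_apply]; omega
      · simp [Finsupp.tsub_apply, Finsupp.single_apply, Ne.symm hil]
    rw [Finset.sum_eq_single (γ - Finsupp.single l 1)]
    · rw [Finsupp.single_apply, if_pos hkey]
      have h2 : (γ - Finsupp.single l 1 : Fin n →₀ ℕ) l + 1 = γ l := by
        simp [Finsupp.tsub_apply]; omega
      rw [h2]
    · intro α hα hne
      rw [Finsupp.single_apply, if_neg]
      intro h
      exact hne (by rw [← h, add_tsub_cancel_right])
    · intro hns
      rw [Finsupp.notMem_support_iff.mp hns]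
      simp
lemma Emap_add {n : ℕ} (l : Fin n) (Λ₁ Λ₂ : (Fin n →₀ ℕ) →₀ ℝ) :
    Emap l (Λ₁ + Λ₂) = Emap l Λ₁ + Emap l Λ₂ := by
  ext γ; simp [Emap_apply, mul_add]

lemma Emap_smul {n : ℕ} (l : Fin n) (c : ℝ) (Λ : (Fin n →₀ ℕ) →₀ ℝ) :
    Emap l (c • Λ) = c • Emap l Λ := by
  ext γ; simp [Emap_apply]; ring

lemma Emap_single {n : ℕ} (l : Fin n) (α : Fin n →₀ ℕ) (c : ℝ) :
    Emap l (Finsupp.single α c)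
      = Finsupp.single (α + Finsupp.single l 1) (((α l + 1 : ℕ) : ℝ) * c) :=
  Finsupp.sum_single_index (by simp)

lemma dshift_apply {n : ℕ} (l : Fin n) (Λ : (Fin n →₀ ℕ) →₀ ℝ) (β : Fin n →₀ ℕ) :
    dshift l Λ β = Λ (β + Finsupp.single l 1) := rfl

lemma dshift_add {n : ℕ} (l : Fin n) (Λ₁ Λ₂ : (Fin n →₀ ℕ) →₀ ℝ) :
    dshift l (Λ₁ + Λ₂) = dshift l Λ₁ + dshift l Λ₂ := by
  ext β; simp [dshift_apply]

lemma dshift_smul {n : ℕ} (l : Fin n) (c : ℝ) (Λ : (Fin n →₀ ℕ) →₀ ℝ) :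
    dshift l (c • Λ) = c • dshift l Λ := by
  ext β; simp [dshift_apply]

lemma dshift_single_zero {n : ℕ} (l : Fin n) (α : Fin n →₀ ℕ) (c : ℝ) (h : α l = 0) :
    dshift l (Finsupp.single α c) = 0 := by
  ext β
  rw [dshift_apply, Finsupp.single_apply, if_neg]
  · simp
  · intro he
    have := congrArg (fun m => m l) he
    simp [Finsupp.add_apply, Finsupp.single_apply] at this
    omega

lemma dshift_single_pos {n : ℕ} (l : Fin n) (α : Fin n →₀ ℕ) (c : ℝ) (h : α l ≠ 0) :
    dshift l (Finsupp.single α c) = Finsupp.single (α - Finsupp.single l 1) c := by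
  ext β
  rw [dshift_apply, Finsupp.single_apply, Finsupp.single_apply]
  congr 1
  rw [eq_iff_iff]
  constructor
  · intro he; rw [he, add_tsub_cancel_right]
  · intro he
    subst he
    ext i
    rcases eq_or_ne i l with rfl | hil
    · simp [Finsupp.tsub_apply]; omega
    · simp [Finsupp.tsub_apply, Finsupp.single_apply, Ne.symm hil]

-- E2
lemma eval_pderiv_applyPoly {n : ℕ} (ζ : Fin n → ℝ) (l : Fin n) (Λ : (Fin n →₀ ℕ) →₀ ℝ)
    (g : MvPolynomial (Fin n) ℝ) :
    eval ζ (pderiv l (applyPoly Λ g)) = applyAt ζ (Emap l Λ) g := by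
  induction Λ using Finsupp.induction_linear with
  | zero =>
      have : Emap (n := n) l 0 = 0 := by ext γ; simp [Emap_apply]
      simp [applyPoly_zero, this, applyAt]
  | add f h ihf ihh =>
      unfold applyAt at *
      rw [applyPoly_add, map_add, map_add, ihf, ihh, Emap_add, map_add]
  | single α c =>
      rw [applyPoly_single, Emap_single, applyAt_single, smul_eq_C_mul, pderiv_C_mul,
        map_mul, eval_C, pderiv_nderiv, smul_eq_C_mul, map_mul, eval_C]
      ring

-- E4
lemma applyAt_X_sub_C_mul {n : ℕ} (ζ : Fin n → ℝ) (l : Fin n) (Λ : (Fin n →₀ ℕ) →₀ ℝ)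
    (g : MvPolynomial (Fin n) ℝ) :
    applyAt ζ Λ ((X l - C (ζ l)) * g) = applyAt ζ (dshift l Λ) g := by
  induction Λ using Finsupp.induction_linear with
  | zero =>
      have : dshift (n := n) l 0 = 0 := by ext β; rw [dshift_apply]; simp
      simp [this, applyAt]
  | add f h ihf ihh =>
      unfold applyAt at *
      rw [map_add, ihf, ihh, dshift_add, map_add]
  | single α c =>
      rw [applyAt_single, nderiv_X_sub_C_mul]
      by_cases h : α l = 0
      · rw [dshift_single_zero l α c h, if_pos h]
        simp [applyAt]
      · rw [dshift_single_pos l α c h, if_neg h, applyAt_single]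
        simp

lemma mem_dualSpace {n : ℕ} {ζ : Fin n → ℝ} {Q : Ideal (MvPolynomial (Fin n) ℝ)}
    {Λ : (Fin n →₀ ℕ) →₀ ℝ} :
    Λ ∈ dualSpace ζ Q ↔ ∀ p ∈ Q, applyAt ζ Λ p = 0 := by
  simp [dualSpace, Submodule.mem_iInf, LinearMap.mem_ker, applyAt]

lemma eval_maxIdealAt {n : ℕ} {ζ : Fin n → ℝ} {p : MvPolynomial (Fin n) ℝ}
    (h : p ∈ maxIdealAt ζ) : eval ζ p = 0 := by
  have hle : maxIdealAt ζ ≤ RingHom.ker (eval ζ : MvPolynomial (Fin n) ℝ →+* ℝ) := by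
    rw [maxIdealAt, Ideal.span_le]
    rintro q ⟨i, rfl⟩
    simp [RingHom.mem_ker]
  exact RingHom.mem_ker.mp (hle h)

lemma sub_C_mem_maxIdealAt {n : ℕ} (ζ : Fin n → ℝ) (p : MvPolynomial (Fin n) ℝ) :
    p - C (eval ζ p) ∈ maxIdealAt ζ := by
  induction p using MvPolynomial.induction_on with
  | C a => simp
  | add p q hp hq =>
      have : p + q - C (eval ζ (p + q)) = (p - C (eval ζ p)) + (q - C (eval ζ q)) := by
        rw [map_add]; push_cast [map_add]; ring
      rw [this]
      exact Ideal.add_mem _ hp hq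
  | mul_X p i hp =>
      have : p * X i - C (eval ζ (p * X i))
          = p * (X i - C (ζ i)) + (p - C (eval ζ p)) * C (ζ i) := by
        rw [map_mul, eval_X, C_mul]; ring
      rw [this]
      refine Ideal.add_mem _ (Ideal.mul_mem_left _ _ ?_) (Ideal.mul_mem_right _ _ hp)
      exact Ideal.subset_span ⟨i, rfl⟩

lemma mem_maxIdealAt_of_eval_eq_zero {n : ℕ} {ζ : Fin n → ℝ} {p : MvPolynomial (Fin n) ℝ}
    (h : eval ζ p = 0) : p ∈ maxIdealAt ζ := by
  have := sub_C_mem_maxIdealAt ζ p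
  rwa [h, map_zero, sub_zero] at this

lemma decomp {n : ℕ} (ζ : Fin n → ℝ) (p : MvPolynomial (Fin n) ℝ) :
    ∃ hs : Fin n → MvPolynomial (Fin n) ℝ,
      p = C (eval ζ p) + ∑ j, (X j - C (ζ j)) * hs j := by
  have hmem := sub_C_mem_maxIdealAt ζ p
  rw [maxIdealAt, Ideal.span, Submodule.mem_span_range_iff_exists_fun] at hmem
  obtain ⟨c, hc⟩ := hmem
  refine ⟨c, ?_⟩
  rw [← sub_eq_iff_eq_add', ← hc]
  exact Finset.sum_congr rfl fun j _ => by rw [smul_eq_mul, mul_comm]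

lemma dshift_mem_dualSpace {n : ℕ} {ζ : Fin n → ℝ} {Q : Ideal (MvPolynomial (Fin n) ℝ)}
    {Λ : (Fin n →₀ ℕ) →₀ ℝ} (hΛ : Λ ∈ dualSpace ζ Q) (l : Fin n) :
    dshift l Λ ∈ dualSpace ζ Q := by
  rw [mem_dualSpace] at hΛ ⊢
  intro p hp
  rw [← applyAt_X_sub_C_mul]
  exact hΛ _ (Ideal.mul_mem_left _ _ hp)

lemma e0_mem_dualSpace {n : ℕ} {ζ : Fin n → ℝ} {Q : Ideal (MvPolynomial (Fin n) ℝ)}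
    (hrad : Q.radical = maxIdealAt ζ) :
    Finsupp.single 0 1 ∈ dualSpace ζ Q := by
  rw [mem_dualSpace]
  intro p hp
  rw [applyAt_single, nderiv_zero, one_mul]
  exact eval_maxIdealAt (hrad ▸ Ideal.le_radical hp)

-- the multiplier
lemma exists_multiplier {n : ℕ} {ζ : Fin n → ℝ} {Q I : Ideal (MvPolynomial (Fin n) ℝ)}
    (S : Finset (Ideal (MvPolynomial (Fin n) ℝ)))
    (hS : ∀ P ∈ S, P.IsPrimary ∧ ¬ P.radical ≤ maxIdealAt ζ)
    (hI : I = S.inf id ⊓ Q) :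
    ∃ h : MvPolynomial (Fin n) ℝ, eval ζ h ≠ 0 ∧ ∀ q ∈ Q, h * q ∈ I := by
  have hchoice : ∀ P ∈ S, ∃ x : MvPolynomial (Fin n) ℝ, (∃ m : ℕ, x ^ m ∈ P) ∧ eval ζ x ≠ 0 := by
    intro P hP
    obtain ⟨x, hx1, hx2⟩ := SetLike.not_le_iff_exists.mp (hS P hP).2
    refine ⟨x, Ideal.mem_radical_iff.mp hx1, fun h0 => hx2 (mem_maxIdealAt_of_eval_eq_zero h0)⟩
  choose xP hxP hevxP using hchoice
  choose mP hmP using hxP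
  classical
  refine ⟨∏ P ∈ S.attach, xP P.1 P.2 ^ mP P.1 P.2, ?_, ?_⟩
  · rw [map_prod]
    refine Finset.prod_ne_zero_iff.mpr (fun P _ => ?_)
    rw [map_pow]
    exact pow_ne_zero _ (hevxP P.1 P.2)
  · intro q hq
    rw [hI]
    refine Submodule.mem_inf.mpr ⟨?_, Ideal.mul_mem_left _ _ hq⟩
    refine Submodule.mem_finsetInf.mpr (fun P hP => ?_)
    have hfac : (∏ R ∈ S.attach, xP R.1 R.2 ^ mP R.1 R.2)
        = xP P hP ^ mP P hP * ∏ R ∈ S.attach.erase ⟨P, hP⟩, xP R.1 R.2 ^ mP R.1 R.2 :=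
      (Finset.mul_prod_erase S.attach _ (Finset.mem_attach S ⟨P, hP⟩)).symm
    rw [hfac]
    exact Ideal.mul_mem_right _ _ (Ideal.mul_mem_right _ _ (hmP P hP))

/-! ### linearity of applyAt in the polynomial -/

lemma applyAt_eq_sum {n : ℕ} (ζ : Fin n → ℝ) (Λ : (Fin n →₀ ℕ) →₀ ℝ)
    (g : MvPolynomial (Fin n) ℝ) :
    applyAt ζ Λ g = Λ.sum fun α c => c * eval ζ (nderiv α g) := by
  unfold applyAt applyAtL
  rw [Finsupp.linearCombination_apply]
  rfl

lemma applyAt_poly_add {n : ℕ} (ζ : Fin n → ℝ) (Λ : (Fin n →₀ ℕ) →₀ ℝ)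
    (p q : MvPolynomial (Fin n) ℝ) :
    applyAt ζ Λ (p + q) = applyAt ζ Λ p + applyAt ζ Λ q := by
  simp only [applyAt_eq_sum, nderiv_add, map_add, mul_add]
  exact Finsupp.sum_add

lemma applyAt_poly_smul {n : ℕ} (ζ : Fin n → ℝ) (Λ : (Fin n →₀ ℕ) →₀ ℝ) (c : ℝ)
    (p : MvPolynomial (Fin n) ℝ) :
    applyAt ζ Λ (c • p) = c * applyAt ζ Λ p := by
  simp only [applyAt_eq_sum, nderiv_smul]
  rw [Finsupp.mul_sum]
  refine Finsupp.sum_congr (fun α _ => ?_)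
  rw [smul_eq_C_mul, map_mul, eval_C]
  ring

noncomputable def applyAtP {n : ℕ} (ζ : Fin n → ℝ) (Λ : (Fin n →₀ ℕ) →₀ ℝ) :
    MvPolynomial (Fin n) ℝ →ₗ[ℝ] ℝ where
  toFun := fun p => applyAt ζ Λ p
  map_add' := applyAt_poly_add ζ Λ
  map_smul' := fun c p => applyAt_poly_smul ζ Λ c p

lemma applyAt_C_mul {n : ℕ} (ζ : Fin n → ℝ) (Λ : (Fin n →₀ ℕ) →₀ ℝ) (c : ℝ)
    (p : MvPolynomial (Fin n) ℝ) :
    applyAt ζ Λ (C c * p) = c * applyAt ζ Λ p := by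
  rw [← smul_eq_C_mul, applyAt_poly_smul]


noncomputable def TvMap {n : ℕ} (v : Fin n → ℝ) (Λ : (Fin n →₀ ℕ) →₀ ℝ) :
    (Fin n →₀ ℕ) →₀ ℝ :=
  ∑ l, v l • Emap l Λ


/-! ### TvMap basics -/

lemma TvMap_add {n : ℕ} (v : Fin n → ℝ) (Λ₁ Λ₂ : (Fin n →₀ ℕ) →₀ ℝ) :
    TvMap v (Λ₁ + Λ₂) = TvMap v Λ₁ + TvMap v Λ₂ := by
  unfold TvMap
  rw [← Finset.sum_add_distrib]
  refine Finset.sum_congr rfl fun l _ => ?_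
  have : Emap l (Λ₁ + Λ₂) = Emap l Λ₁ + Emap l Λ₂ := by
    ext γ; simp [Emap_apply, mul_add]
  rw [this, smul_add]

lemma TvMap_smul {n : ℕ} (v : Fin n → ℝ) (c : ℝ) (Λ : (Fin n →₀ ℕ) →₀ ℝ) :
    TvMap v (c • Λ) = c • TvMap v Λ := by
  unfold TvMap
  rw [Finset.smul_sum]
  refine Finset.sum_congr rfl fun l _ => ?_
  have : Emap l (c • Λ) = c • Emap l Λ := by
    ext γ; simp [Emap_apply]; ring
  rw [this, smul_comm]

lemma TvMap_zero {n : ℕ} (v : Fin n → ℝ) : TvMap v (0 : (Fin n →₀ ℕ) →₀ ℝ) = 0 := by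
  unfold TvMap
  refine Finset.sum_eq_zero fun l _ => ?_
  have : Emap l (0 : (Fin n →₀ ℕ) →₀ ℝ) = 0 := by ext γ; simp [Emap_apply]
  rw [this, smul_zero]

lemma TvMap_apply {n : ℕ} (v : Fin n → ℝ) (Λ : (Fin n →₀ ℕ) →₀ ℝ) (γ : Fin n →₀ ℕ) :
    TvMap v Λ γ = ∑ l, v l * ((γ l : ℝ) * Λ (γ - Finsupp.single l 1)) := by
  unfold TvMap
  rw [Finsupp.finset_sum_apply]
  exact Finset.sum_congr rfl fun l _ => by rw [Finsupp.smul_apply, Emap_apply, smul_eq_mul]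

/-- the commutator `σ_j ∘ T_v = T_v ∘ σ_j + v_j · id`. -/
lemma dshift_TvMap {n : ℕ} (v : Fin n → ℝ) (j : Fin n) (Λ : (Fin n →₀ ℕ) →₀ ℝ) :
    dshift j (TvMap v Λ) = TvMap v (dshift j Λ) + v j • Λ := by
  ext β
  rw [dshift_apply, TvMap_apply, Finsupp.add_apply, TvMap_apply, Finsupp.smul_apply,
    smul_eq_mul]
  have key : ∀ l, v l * (((β + Finsupp.single j 1 : Fin n →₀ ℕ) l : ℝ) *
        Λ (β + Finsupp.single j 1 - Finsupp.single l 1))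
      = v l * ((β l : ℝ) * dshift j Λ (β - Finsupp.single l 1))
        + (if l = j then v j * Λ β else 0) := by
    intro l
    rcases eq_or_ne l j with rfl | hlj
    · rw [if_pos rfl]
      have h1 : (β + Finsupp.single l 1 : Fin n →₀ ℕ) l = β l + 1 := by
        simp [Finsupp.add_apply]
      have h2 : β + Finsupp.single l 1 - Finsupp.single l 1 = β := add_tsub_cancel_right _ _
      rw [h1, h2, dshift_apply]
      by_cases hb : β l = 0
      · have : β - Finsupp.single l 1 = β := by
          ext i
          rcases eq_or_ne i l with rfl | hil
          · simp [Finsupp.tsub_apply, hb]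
          · simp [Finsupp.tsub_apply, Finsupp.single_apply, Ne.symm hil]
        rw [this, hb]
        push_cast
        ring
      · have : β - Finsupp.single l 1 + Finsupp.single l 1 = β := by
          ext i
          rcases eq_or_ne i l with rfl | hil
          · simp [Finsupp.tsub_apply]; omega
          · simp [Finsupp.tsub_apply, Finsupp.single_apply, Ne.symm hil]
        rw [this]
        push_cast
        ring
    · rw [if_neg hlj, dshift_apply]
      have h1 : (β + Finsupp.single j 1 : Fin n →₀ ℕ) l = β l := by
        simp [Finsupp.add_apply, Finsupp.single_apply, Ne.symm hlj]
      have h2 : β + Finsupp.single j 1 - Finsupp.single l 1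
          = β - Finsupp.single l 1 + Finsupp.single j 1 := by
        ext i
        simp only [Finsupp.tsub_apply, Finsupp.add_apply, Finsupp.single_apply]
        rcases eq_or_ne l i with rfl | hli
        · rw [if_pos rfl, if_neg (fun h : j = l => hlj h.symm)]
          omega
        · rw [if_neg hli]
          rcases eq_or_ne j i with rfl | hji
          · rw [if_pos rfl]
            omega
          · rw [if_neg hji]
            omega
      rw [h1, h2, add_zero]
  rw [Finset.sum_congr rfl (fun l _ => key l), Finset.sum_add_distrib,
    Finset.sum_ite_eq' Finset.univ j (fun _ => v j * Λ β)]
  simp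

/-! ### multideg -/

lemma multideg_add {n : ℕ} (β γ : Fin n →₀ ℕ) :
    multideg (β + γ) = multideg β + multideg γ := by
  unfold multideg
  exact Finsupp.sum_add_index' (fun _ => rfl) (fun _ _ _ => rfl)

lemma multideg_single {n : ℕ} (l : Fin n) (k : ℕ) :
    multideg (Finsupp.single l k) = k :=
  Finsupp.sum_single_index rfl

/-! ### the main induction -/

theorem Tv_mem {n s : ℕ} {ζ : Fin n → ℝ} {Q : Ideal (MvPolynomial (Fin n) ℝ)}
    {f : Fin s → MvPolynomial (Fin n) ℝ}
    (S : Finset (Ideal (MvPolynomial (Fin n) ℝ)))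
    (hS : ∀ P ∈ S, P.IsPrimary ∧ ¬ P.radical ≤ maxIdealAt ζ)
    (hI : Ideal.span (Set.range f) = S.inf id ⊓ Q)
    (v : Fin n → ℝ)
    (hrel : ∀ Λ ∈ dualSpace ζ Q, ∀ k, applyAt ζ (TvMap v Λ) (f k) = 0) :
    ∀ Λ ∈ dualSpace ζ Q, TvMap v Λ ∈ dualSpace ζ Q := by
  have hfQ : ∀ k, f k ∈ Q := fun k => by
    have : f k ∈ Ideal.span (Set.range f) := Ideal.subset_span ⟨k, rfl⟩
    rw [hI] at this
    exact this.2
  -- main step, assuming the σ-shifted versions are known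
  have step : ∀ Λ ∈ dualSpace ζ Q, (∀ j, TvMap v (dshift j Λ) ∈ dualSpace ζ Q) →
      TvMap v Λ ∈ dualSpace ζ Q := by
    intro Λ hΛ hσ
    have hσTv : ∀ j, dshift j (TvMap v Λ) ∈ dualSpace ζ Q := by
      intro j
      rw [dshift_TvMap]
      exact Submodule.add_mem _ (hσ j) (Submodule.smul_mem _ _ hΛ)
    -- vanishing on products g * f k
    have hprod : ∀ (g : MvPolynomial (Fin n) ℝ) (k : Fin s),
        applyAt ζ (TvMap v Λ) (g * f k) = 0 := by
      intro g k
      obtain ⟨hs, hg⟩ := decomp ζ g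
      have hexp : g * f k
          = C (eval ζ g) * f k + ∑ j, (X j - C (ζ j)) * (hs j * f k) := by
        nth_rewrite 1 [hg]
        rw [add_mul, Finset.sum_mul]
        exact congrArg _ (Finset.sum_congr rfl fun j _ => mul_assoc _ _ _)
      rw [hexp, applyAt_poly_add, applyAt_C_mul, hrel Λ hΛ k, mul_zero, zero_add]
      have : applyAt ζ (TvMap v Λ) (∑ j, (X j - C (ζ j)) * (hs j * f k))
          = ∑ j, applyAt ζ (TvMap v Λ) ((X j - C (ζ j)) * (hs j * f k)) :=
        map_sum (applyAtP ζ (TvMap v Λ)) _ _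
      rw [this]
      refine Finset.sum_eq_zero fun j _ => ?_
      rw [applyAt_X_sub_C_mul]
      exact mem_dualSpace.mp (hσTv j) _ (Ideal.mul_mem_left _ _ (hfQ k))
    -- vanishing on the whole ideal span
    have hideal : ∀ p ∈ Ideal.span (Set.range f), applyAt ζ (TvMap v Λ) p = 0 := by
      intro p hp
      rw [Ideal.span, Submodule.mem_span_range_iff_exists_fun] at hp
      obtain ⟨c, hc⟩ := hp
      rw [← hc]
      have : applyAt ζ (TvMap v Λ) (∑ k, c k • f k)
          = ∑ k, applyAt ζ (TvMap v Λ) (c k • f k) :=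
        map_sum (applyAtP ζ (TvMap v Λ)) _ _
      rw [this]
      refine Finset.sum_eq_zero fun k _ => ?_
      rw [smul_eq_mul]
      exact hprod (c k) k
    -- transfer to Q via the multiplier
    obtain ⟨h, hh0, hhQ⟩ := exists_multiplier S hS hI
    rw [mem_dualSpace]
    intro q hq
    obtain ⟨hs, hg⟩ := decomp ζ h
    have hexp : h * q = C (eval ζ h) * q + ∑ j, (X j - C (ζ j)) * (hs j * q) := by
      nth_rewrite 1 [hg]
      rw [add_mul, Finset.sum_mul]
      exact congrArg _ (Finset.sum_congr rfl fun j _ => mul_assoc _ _ _)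
    have h1 : applyAt ζ (TvMap v Λ) (h * q) = 0 := hideal _ (hhQ q hq)
    rw [hexp, applyAt_poly_add, applyAt_C_mul] at h1
    have h2 : applyAt ζ (TvMap v Λ) (∑ j, (X j - C (ζ j)) * (hs j * q)) = 0 := by
      have h3 : applyAt ζ (TvMap v Λ) (∑ j, (X j - C (ζ j)) * (hs j * q))
          = ∑ j, applyAt ζ (TvMap v Λ) ((X j - C (ζ j)) * (hs j * q)) :=
        map_sum (applyAtP ζ (TvMap v Λ)) _ _
      rw [h3]
      refine Finset.sum_eq_zero fun j _ => ?_
      rw [applyAt_X_sub_C_mul]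
      exact mem_dualSpace.mp (hσTv j) _ (Ideal.mul_mem_left _ _ hq)
    rw [h2, add_zero] at h1
    exact (mul_eq_zero.mp h1).resolve_left hh0
  -- induction on the degree bound
  have main : ∀ t : ℕ, ∀ Λ ∈ dualSpace ζ Q, (∀ α ∈ Λ.support, multideg α ≤ t) →
      TvMap v Λ ∈ dualSpace ζ Q := by
    intro t
    induction t with
    | zero =>
        intro Λ hΛ hdeg
        refine step Λ hΛ fun j => ?_
        have : dshift j Λ = 0 := by
          ext β
          rw [dshift_apply]
          by_contra hne
          have hmem : β + Finsupp.single j 1 ∈ Λ.support := Finsupp.mem_support_iff.mpr hne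
          have := hdeg _ hmem
          rw [multideg_add, multideg_single] at this
          omega
        rw [this, TvMap_zero]
        exact Submodule.zero_mem _
    | succ t ih =>
        intro Λ hΛ hdeg
        refine step Λ hΛ fun j => ?_
        refine ih (dshift j Λ) (dshift_mem_dualSpace hΛ j) fun β hβ => ?_
        rw [Finsupp.mem_support_iff, dshift_apply] at hβ
        have hmem : β + Finsupp.single j 1 ∈ Λ.support := Finsupp.mem_support_iff.mpr hβ
        have := hdeg _ hmem
        rw [multideg_add, multideg_single] at this
        omega
  intro Λ hΛ
  exact main (Λ.support.sup multideg) Λ hΛ (fun α hα => Finset.le_sup hα)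

/-! ### iterates of T_v on the evaluation functional -/

noncomputable def wseq {n : ℕ} (v : Fin n → ℝ) : ℕ → ((Fin n →₀ ℕ) →₀ ℝ)
  | 0 => Finsupp.single 0 1
  | (k+1) => TvMap v (wseq v k)

lemma wseq_supp {n : ℕ} (v : Fin n → ℝ) (k : ℕ) :
    ∀ γ ∈ (wseq v k).support, multideg γ = k := by
  induction k with
  | zero =>
      intro γ hγ
      rw [wseq, Finsupp.mem_support_iff, Finsupp.single_apply] at hγ
      split_ifs at hγ with h
      · subst h; rfl
      · exact absurd rfl hγ
  | succ k ih =>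
      intro γ hγ
      rw [wseq, Finsupp.mem_support_iff, TvMap_apply] at hγ
      obtain ⟨l, _, hl⟩ := Finset.exists_ne_zero_of_sum_ne_zero hγ
      have hγl : γ l ≠ 0 := by
        intro h0; rw [h0] at hl; simp at hl
      have hw : γ - Finsupp.single l 1 ∈ (wseq v k).support := by
        rw [Finsupp.mem_support_iff]
        intro h0; rw [h0] at hl; simp at hl
      have hd := ih _ hw
      have hγeq : γ = (γ - Finsupp.single l 1) + Finsupp.single l 1 := by
        ext i
        rcases eq_or_ne i l with rfl | hil
        · simp [Finsupp.tsub_apply]; omega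
        · simp [Finsupp.tsub_apply, Finsupp.single_apply, Ne.symm hil]
      rw [hγeq, multideg_add, multideg_single, hd]

lemma wseq_val {n : ℕ} (v : Fin n → ℝ) (l0 : Fin n) (k : ℕ) :
    (wseq v k) (Finsupp.single l0 k) = (Nat.factorial k : ℝ) * (v l0)^k := by
  induction k with
  | zero => simp [wseq]
  | succ k ih =>
      rw [wseq, TvMap_apply]
      have hsub : Finsupp.single l0 (k+1) - Finsupp.single l0 1 = Finsupp.single l0 k := by
        ext i
        rcases eq_or_ne i l0 with rfl | hil
        · simp [Finsupp.tsub_apply]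
        · simp [Finsupp.tsub_apply, Finsupp.single_apply, Ne.symm hil]
      rw [Finset.sum_eq_single l0]
      · rw [hsub, ih, Finsupp.single_apply, if_pos rfl]
        push_cast [Nat.factorial_succ]
        ring
      · intro l _ hl
        rw [Finsupp.single_apply, if_neg (Ne.symm hl)]
        simp
      · intro h
        exact absurd (Finset.mem_univ l0) h

lemma wseq_ne_zero {n : ℕ} (v : Fin n → ℝ) (l0 : Fin n) (hv : v l0 ≠ 0) (k : ℕ) :
    wseq v k ≠ 0 := by
  intro h0
  have := wseq_val v l0 k
  rw [h0] at this
  simp only [Finsupp.coe_zero, Pi.zero_apply] at this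
  have hfac : (Nat.factorial k : ℝ) ≠ 0 := Nat.cast_ne_zero.mpr (Nat.factorial_ne_zero k)
  exact (mul_ne_zero hfac (pow_ne_zero k hv)) this.symm

lemma wseq_li {n : ℕ} (v : Fin n → ℝ) (l0 : Fin n) (hv : v l0 ≠ 0) (N : ℕ) :
    LinearIndependent ℝ (fun k : Fin N => wseq v (k : ℕ)) := by
  rw [Fintype.linearIndependent_iff]
  intro c hc k
  have happ := congrArg (fun Λ : (Fin n →₀ ℕ) →₀ ℝ => Λ (Finsupp.single l0 (k : ℕ))) hc
  simp only [Finsupp.finset_sum_apply, Finsupp.smul_apply, smul_eq_mul,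
    Finsupp.coe_zero, Pi.zero_apply] at happ
  rw [Finset.sum_eq_single k] at happ
  · rw [wseq_val] at happ
    have hfac : (Nat.factorial (k : ℕ) : ℝ) ≠ 0 := Nat.cast_ne_zero.mpr (Nat.factorial_ne_zero _)
    have := mul_ne_zero hfac (pow_ne_zero (k : ℕ) hv)
    rcases mul_eq_zero.mp happ with h | h
    · exact h
    · exact absurd h this
  · intro m _ hm
    have : (wseq v (m : ℕ)) (Finsupp.single l0 (k : ℕ)) = 0 := by
      by_contra hne
      have := wseq_supp v (m : ℕ) _ (Finsupp.mem_support_iff.mpr hne)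
      rw [multideg_single] at this
      exact hm (Fin.ext (by omega))
    rw [this, mul_zero]
  · intro h
    exact absurd (Finset.mem_univ k) h


set_option maxHeartbeats 1000000 in
theorem rows_span {n s μ : ℕ} (f : Fin s → MvPolynomial (Fin n) ℝ) (ζ : Fin n → ℝ)
    (Q : Ideal (MvPolynomial (Fin n) ℝ))
    (hQ : IsPrimaryComponentAt ζ (Ideal.span (Set.range f)) Q)
    (Λs : Fin μ → ((Fin n →₀ ℕ) →₀ ℝ))
    (hΛli : LinearIndependent ℝ Λs)
    (hΛsp : Submodule.span ℝ (Set.range Λs) = dualSpace ζ Q) :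
    Submodule.span ℝ (Set.range (jacRow Λs f ζ)) = ⊤ := by
  by_contra hne
  obtain ⟨hQprim, hrad, S, hS, hI⟩ := hQ
  obtain ⟨φ, hφ0, hφmap⟩ :=
    Submodule.exists_dual_map_eq_bot_of_lt_top (lt_top_iff_ne_top.mpr hne) inferInstance
  have hφ : ∀ ik : Fin μ × Fin s, φ (jacRow Λs f ζ ik) = 0 := by
    intro ik
    have hmem : jacRow Λs f ζ ik ∈ Submodule.span ℝ (Set.range (jacRow Λs f ζ)) :=
      Submodule.subset_span ⟨ik, rfl⟩
    have := Submodule.mem_map_of_mem (f := φ) hmem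
    rw [hφmap, Submodule.mem_bot] at this
    exact this
  set u : Fin n → ℝ := fun l => φ (fun m => if l = m then 1 else 0) with hu
  have hφx : ∀ x : Fin n → ℝ, φ x = ∑ l, x l * u l := by
    intro x
    nth_rewrite 1 [pi_eq_sum_univ x]
    rw [map_sum]
    exact Finset.sum_congr rfl fun l _ => by rw [map_smul, smul_eq_mul]
  have hune : ∃ l0, u l0 ≠ 0 := by
    by_contra hc
    push_neg at hc
    exact hφ0 (LinearMap.ext fun x => by rw [hφx, LinearMap.zero_apply]; simp [hc])
  obtain ⟨l0, hul0⟩ := hune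
  -- the key relation
  have hTv : ∀ Λ (g : MvPolynomial (Fin n) ℝ),
      applyAt ζ (TvMap u Λ) g = ∑ l, u l * applyAt ζ (Emap l Λ) g := by
    intro Λ g
    unfold applyAt TvMap
    rw [map_sum]
    exact Finset.sum_congr rfl fun l _ => by rw [map_smul, smul_eq_mul]
  have hrelbasis : ∀ (i : Fin μ) (k : Fin s), applyAt ζ (TvMap u (Λs i)) (f k) = 0 := by
    intro i k
    rw [hTv]
    have : ∀ l, applyAt ζ (Emap l (Λs i)) (f k) = jacRow Λs f ζ (i, k) l := fun l =>
      (eval_pderiv_applyPoly ζ l (Λs i) (f k)).symm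
    have h2 : ∑ l, u l * applyAt ζ (Emap l (Λs i)) (f k)
        = ∑ l, jacRow Λs f ζ (i, k) l * u l :=
      Finset.sum_congr rfl fun l _ => by rw [this l, mul_comm]
    rw [h2, ← hφx]
    exact hφ (i, k)
  have hrel : ∀ Λ ∈ dualSpace ζ Q, ∀ k, applyAt ζ (TvMap u Λ) (f k) = 0 := by
    intro Λ hΛ k
    let Lmap : ((Fin n →₀ ℕ) →₀ ℝ) →ₗ[ℝ] ℝ :=
      { toFun := fun Λ' => applyAt ζ (TvMap u Λ') (f k)
        map_add' := fun a b => by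
          show applyAt ζ (TvMap u (a + b)) (f k)
            = applyAt ζ (TvMap u a) (f k) + applyAt ζ (TvMap u b) (f k)
          unfold applyAt
          rw [TvMap_add, map_add]
        map_smul' := fun c a => by
          show applyAt ζ (TvMap u (c • a)) (f k) = c • applyAt ζ (TvMap u a) (f k)
          unfold applyAt
          rw [TvMap_smul, map_smul] }
    have hsub : Submodule.span ℝ (Set.range Λs) ≤ LinearMap.ker Lmap := by
      rw [Submodule.span_le]
      rintro x ⟨i, rfl⟩
      exact hrelbasis i k
    rw [← hΛsp] at hΛ
    exact hsub hΛ
  -- closure of the dual space under TvMap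
  have hclose := Tv_mem S hS hI u hrel
  have hwmem : ∀ k : ℕ, wseq u k ∈ dualSpace ζ Q := by
    intro k
    induction k with
    | zero => exact e0_mem_dualSpace hrad
    | succ k ih => exact hclose _ ih
  -- dimension contradiction
  have hfd : FiniteDimensional ℝ ↥(dualSpace ζ Q) := by
    rw [← hΛsp]
    exact FiniteDimensional.span_of_finite ℝ (Set.finite_range Λs)
  have hdim : Module.finrank ℝ ↥(dualSpace ζ Q) = μ := by
    rw [← hΛsp, finrank_span_eq_card hΛli, Fintype.card_fin]
  have hsple : Submodule.span ℝ (Set.range (fun k : Fin (μ+1) => wseq u (k : ℕ)))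
      ≤ dualSpace ζ Q := by
    rw [Submodule.span_le]
    rintro x ⟨k, rfl⟩
    exact hwmem k
  have h1 : Module.finrank ℝ
      ↥(Submodule.span ℝ (Set.range (fun k : Fin (μ+1) => wseq u (k : ℕ)))) = μ + 1 := by
    rw [finrank_span_eq_card (wseq_li u l0 hul0 (μ+1)), Fintype.card_fin]
  have h2 := Submodule.finrank_mono hsple
  rw [h1, hdim] at h2
  omega

lemma det_ne_zero_of_rows {n : ℕ} (M : Matrix (Fin n) (Fin n) ℝ)
    (h : LinearIndependent ℝ (fun j => M j)) : M.det ≠ 0 := by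
  intro hdet
  obtain ⟨v, hv0, hvM⟩ := Matrix.exists_vecMul_eq_zero_iff.mpr hdet
  have hz : ∑ j, v j • M j = 0 := by
    funext l
    have h2 := congrFun hvM l
    simp only [Matrix.vecMul, dotProduct] at h2
    simpa [Finset.sum_apply] using h2
  have := Fintype.linearIndependent_iff.mp h v hz
  exact hv0 (funext this)

lemma extract_rows {n s μ : ℕ} (rows : Fin μ × Fin s → (Fin n → ℝ))
    (hspan : Submodule.span ℝ (Set.range rows) = ⊤) :
    ∃ sel : Fin n → Fin μ × Fin s, Function.Injective sel ∧
      LinearIndependent ℝ (fun j : Fin n => rows (sel j)) := by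
  classical
  obtain ⟨t, hts, htspan, htli⟩ := exists_linearIndependent ℝ (Set.range rows)
  have hfin : t.Finite := htli.finite
  haveI := hfin.fintype
  have hb : Module.Basis t ℝ (Fin n → ℝ) := Module.Basis.mk htli (by
    rw [Subtype.range_coe, htspan, hspan])
  have hcard : Fintype.card t = n := by
    rw [← Module.finrank_eq_card_basis hb, Module.finrank_fin_fun]
  let e : Fin n ≃ t := (Fintype.equivFinOfCardEq hcard).symm
  have hix : ∀ x : t, ∃ ik, rows ik = (x : Fin n → ℝ) := fun x => hts x.2
  choose ix hixeq using hix
  refine ⟨fun j => ix (e j), ?_, ?_⟩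
  · intro a b hab
    simp only at hab
    have : ((e a : t) : Fin n → ℝ) = ((e b : t) : Fin n → ℝ) := by
      rw [← hixeq (e a), ← hixeq (e b), hab]
    exact e.injective (Subtype.ext this)
  · have hfun : (fun j : Fin n => rows (ix (e j))) = fun j => ((e j : t) : Fin n → ℝ) :=
      funext fun j => hixeq (e j)
    rw [hfun]
    exact htli.comp e e.injective

/-- Deflation Theorem 1: if `f` has a `μ`-fold isolated zero at
`ζ` and `(Λ₁,…,Λ_μ)` is a basis of `𝒟_ζ`, then there exist `n` index pairs `I`
whose rows of `J_{𝒟f}(ζ)` are linearly independent, and for any such choice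
the square `n × n` system `𝒟f^I = (Λ_{i_j}(∂_x)[f_{k_j}])_j` has a simple root
at `ζ`: it vanishes there and its Jacobian determinant is nonzero. -/
theorem stmt13 {n s μ : ℕ} (f : Fin s → MvPolynomial (Fin n) ℝ) (ζ : Fin n → ℝ)
    (Q : Ideal (MvPolynomial (Fin n) ℝ))
    (hQ : IsPrimaryComponentAt ζ (Ideal.span (Set.range f)) Q)
    (hμ : Module.finrank ℝ (MvPolynomial (Fin n) ℝ ⧸ Q) = μ)
    (Λs : Fin μ → ((Fin n →₀ ℕ) →₀ ℝ))
    (hΛli : LinearIndependent ℝ Λs)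
    (hΛsp : Submodule.span ℝ (Set.range Λs) = dualSpace ζ Q) :
    (∃ sel : Fin n → Fin μ × Fin s, Function.Injective sel ∧
      LinearIndependent ℝ (fun j : Fin n => jacRow Λs f ζ (sel j))) ∧
    (∀ sel : Fin n → Fin μ × Fin s, Function.Injective sel →
      LinearIndependent ℝ (fun j : Fin n => jacRow Λs f ζ (sel j)) →
      (∀ j : Fin n,
        MvPolynomial.eval ζ (applyPoly (Λs (sel j).1) (f (sel j).2)) = 0) ∧
      (Matrix.of fun j l : Fin n => jacRow Λs f ζ (sel j) l).det ≠ 0) := by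
  have hfQ : ∀ k, f k ∈ Q := by
    obtain ⟨_, _, S, hS, hI⟩ := hQ
    intro k
    have : f k ∈ Ideal.span (Set.range f) := Ideal.subset_span ⟨k, rfl⟩
    rw [hI] at this
    exact this.2
  have hΛD : ∀ i, Λs i ∈ dualSpace ζ Q := fun i =>
    hΛsp ▸ Submodule.subset_span ⟨i, rfl⟩
  constructor
  · exact extract_rows (jacRow Λs f ζ) (rows_span f ζ Q hQ Λs hΛli hΛsp)
  · intro sel hinj hli
    constructor
    · intro j
      rw [eval_applyPoly]
      exact mem_dualSpace.mp (hΛD (sel j).1) _ (hfQ (sel j).2)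
    · exact det_ne_zero_of_rows _ hli
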